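/- Let G be a fully residually free group and let x, y ∈ G be two non-commuting elements. Then x and y generate a free subgroup of rank 2. -/

import Mathlib

/-- A group is fully residually free if every finite subset can be mapped injectively
into a free group by a group homomorphism. -/
def IsFullyResiduallyFree (G : Type*) [Group G] : Prop :=
  ∀ S : Finset G, ∃ (ι : Type) (φ : G →* FreeGroup ι), Set.InjOn φ ↑S


namespace NCF
open Cardinal

variable {α : Type} [DecidableEq α]

section RF

variable (L : List (α × Bool)) (c : α)

/-- forward map -/
def fval (j : ℕ) : ℕ := if L[j]? = some (c, false) then j + 1 else j - 1

/-- backward map -/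
def gval (j : ℕ) : ℕ := if L[j]? = some (c, true) then j + 1 else j - 1

def Pp (j : ℕ) : Prop := L[j]? = some (c, false) ∨ (1 ≤ j ∧ L[j - 1]? = some (c, true))

def Qq (j : ℕ) : Prop := L[j]? = some (c, true) ∨ (1 ≤ j ∧ L[j - 1]? = some (c, false))

instance : DecidablePred (Pp L c) := fun _ => by unfold Pp; infer_instance
instance : DecidablePred (Qq L c) := fun _ => by unfold Qq; infer_instance

variable (hL : FreeGroup.reduce L = L)

include hL in
lemma no_adj {i : ℕ} {x : α} {b : Bool} (h1 : L[i]? = some (x, b))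
    (h2 : L[i + 1]? = some (x, !b)) : False := by
  obtain ⟨hi1, hv1⟩ := List.getElem?_eq_some_iff.mp h1
  obtain ⟨hi2, hv2⟩ := List.getElem?_eq_some_iff.mp h2
  have hsplit : L = L.take i ++ (x, b) :: (x, !b) :: L.drop (i + 2) := by
    conv_lhs => rw [← List.take_append_drop i L]
    rw [List.drop_eq_getElem_cons hi1, hv1, List.drop_eq_getElem_cons hi2, hv2]
  exact FreeGroup.reduce.not (hL.trans hsplit)

include hL in
lemma h1 {j : ℕ} (hp : Pp L c j) :
    fval L c j ≤ L.length ∧ Qq L c (fval L c j) ∧ gval L c (fval L c j) = j := by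
  by_cases hc : L[j]? = some (c, false)
  · have hj : j < L.length := (List.getElem?_eq_some_iff.mp hc).1
    have hf : fval L c j = j + 1 := if_pos hc
    rw [hf]
    refine ⟨hj, Or.inr ⟨Nat.le_add_left 1 j, by simpa using hc⟩, ?_⟩
    unfold gval
    rw [if_neg, Nat.add_sub_cancel]
    intro h
    exact no_adj L hL hc (by simpa using h)
  · rcases hp with hp | ⟨hj1, hjt⟩
    · exact absurd hp hc
    have hjlt : j - 1 < L.length := (List.getElem?_eq_some_iff.mp hjt).1
    have hf : fval L c j = j - 1 := if_neg hc
    rw [hf]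
    refine ⟨le_of_lt hjlt, Or.inl hjt, ?_⟩
    unfold gval
    rw [if_pos hjt]
    omega

include hL in
lemma h2 {j : ℕ} (hq : Qq L c j) :
    gval L c j ≤ L.length ∧ Pp L c (gval L c j) ∧ fval L c (gval L c j) = j := by
  by_cases hc : L[j]? = some (c, true)
  · have hj : j < L.length := (List.getElem?_eq_some_iff.mp hc).1
    have hf : gval L c j = j + 1 := if_pos hc
    rw [hf]
    refine ⟨hj, Or.inr ⟨Nat.le_add_left 1 j, by simpa using hc⟩, ?_⟩
    unfold fval
    rw [if_neg, Nat.add_sub_cancel]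
    intro h
    exact no_adj L hL hc (by simpa using h)
  · rcases hq with hq | ⟨hj1, hjt⟩
    · exact absurd hq hc
    have hjlt : j - 1 < L.length := (List.getElem?_eq_some_iff.mp hjt).1
    have hf : gval L c j = j - 1 := if_neg hc
    rw [hf]
    refine ⟨le_of_lt hjlt, Or.inl hjt, ?_⟩
    unfold fval
    rw [if_pos hjt]
    omega

/-- the partial bijection attached to the generator `c`. -/
def pre : {x : Fin (L.length + 1) // Pp L c x.1} ≃ {x : Fin (L.length + 1) // Qq L c x.1} :=
    { toFun := fun x => ⟨⟨fval L c x.1.1, Nat.lt_succ_of_le (h1 L c hL x.2).1⟩,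
        (h1 L c hL x.2).2.1⟩
      invFun := fun x => ⟨⟨gval L c x.1.1, Nat.lt_succ_of_le (h2 L c hL x.2).1⟩,
        (h2 L c hL x.2).2.1⟩
      left_inv := fun x => by
        ext
        exact (h1 L c hL x.2).2.2
      right_inv := fun x => by
        ext
        exact (h2 L c hL x.2).2.2 }

/-- the permutation attached to the generator `c`. -/
noncomputable def sigma : Equiv.Perm (Fin (L.length + 1)) :=
  (pre L c hL).extendSubtype

lemma sigma_apply {j : ℕ} (hj : j < L.length + 1) (hp : Pp L c j) :
    sigma L c hL ⟨j, hj⟩ = ⟨fval L c j, Nat.lt_succ_of_le (h1 L c hL hp).1⟩ :=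
  Equiv.extendSubtype_apply_of_mem (pre L c hL) ⟨j, hj⟩ hp

include hL in
lemma factor_spec {i : ℕ} {x : α} {b : Bool} (hi : L[i]? = some (x, b))
    (hb1 : i < L.length + 1) (hb2 : i + 1 < L.length + 1) :
    (cond b (sigma L x hL) (sigma L x hL)⁻¹) ⟨i + 1, hb2⟩ = ⟨i, hb1⟩ := by
  cases b with
  | true =>
    have hp : Pp L x (i + 1) := Or.inr ⟨Nat.le_add_left 1 i, by simpa using hi⟩
    have := sigma_apply L x hL hb2 hp
    rw [cond_true, this]
    have hfv : fval L x (i + 1) = i := by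
      unfold fval
      rw [if_neg, Nat.add_sub_cancel]
      intro h
      exact no_adj L hL hi (by simpa using h)
    exact Fin.ext hfv
  | false =>
    rw [cond_false]
    have hp : Pp L x i := Or.inl hi
    have hfv : fval L x i = i + 1 := if_pos hi
    rw [Equiv.Perm.inv_eq_iff_eq, sigma_apply L x hL hb1 hp]
    exact (Fin.ext hfv.symm)

include hL in
lemma walk : ∀ (l : List (α × Bool)) (m : ℕ) (_ : l = L.drop m) (hml : m + l.length = L.length),
    ((l.map fun y => cond y.2 (sigma L y.1 hL) (sigma L y.1 hL)⁻¹)).prod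
      ⟨L.length, Nat.lt_succ_self _⟩ = ⟨m, by omega⟩ := by
  intro l
  induction l with
  | nil =>
    intro m _ hml
    simp only [List.map_nil, List.prod_nil, Equiv.Perm.one_apply]
    ext
    simp only [List.length_nil, Nat.add_zero] at hml
    simp [hml]
  | cons y l' ih =>
    intro m hdl hml
    have hm1 : l' = L.drop (m + 1) := by
      rw [← List.tail_drop, ← hdl]
      rfl
    have hml' : (m + 1) + l'.length = L.length := by
      simp only [List.length_cons] at hml
      omega
    have hget : L[m]? = some y := by
      have h0 : (L.drop m)[0]? = some y := by rw [← hdl]; simp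
      simpa using h0
    rcases y with ⟨x, b⟩
    simp only [List.map_cons, List.prod_cons, Equiv.Perm.mul_apply]
    rw [ih (m + 1) hm1 hml']
    exact factor_spec L hL hget (by omega) (by omega)

end RF

theorem exists_perm_hom (g : FreeGroup α) (hg : g ≠ 1) :
    ∃ (n : ℕ) (π : FreeGroup α →* Equiv.Perm (Fin (n + 1))), π g ≠ 1 := by
  obtain ⟨L, hmkL, hL⟩ : ∃ L, FreeGroup.mk L = g ∧ FreeGroup.reduce L = L :=
    ⟨g.toWord, g.mk_toWord, g.reduce_toWord⟩
  subst hmkL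
  have htw : (FreeGroup.mk L).toWord = L := by rw [FreeGroup.toWord_mk, hL]
  have hlen : 0 < L.length := by
    rcases Nat.eq_zero_or_pos L.length with h | h
    · refine absurd ?_ hg
      rw [← FreeGroup.toWord_eq_nil_iff, htw]
      exact List.length_eq_zero_iff.mp h
    · exact h
  refine ⟨L.length, FreeGroup.lift (fun c => sigma L c hL), fun hone => ?_⟩
  have heval : FreeGroup.lift (fun c => sigma L c hL) (FreeGroup.mk L)
      = ((L.map fun y => cond y.2 (sigma L y.1 hL) (sigma L y.1 hL)⁻¹)).prod :=
    FreeGroup.lift_mk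
  have hone' : ((L.map fun y => cond y.2 (sigma L y.1 hL) (sigma L y.1 hL)⁻¹)).prod = 1 :=
    heval.symm.trans hone
  have hw := walk L hL L 0 rfl (by simp)
  have hcontr : (⟨0, by omega⟩ : Fin (L.length + 1)) = ⟨L.length, Nat.lt_succ_self _⟩ :=
    hw.symm.trans
      (congrArg (fun p : Equiv.Perm (Fin (L.length + 1)) => p ⟨L.length, Nat.lt_succ_self _⟩)
        hone')
  have := congrArg Fin.val hcontr
  simp only at this
  omega

theorem hopf (ψ : FreeGroup (Fin 2) →* FreeGroup (Fin 2)) (hsurj : Function.Surjective ψ) :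
    Function.Injective ψ := by
  rw [injective_iff_map_eq_one]
  intro g hgker
  by_contra hg
  obtain ⟨n, π, hπ⟩ := exists_perm_hom g hg
  let F := FreeGroup (Fin 2)
  let it : ℕ → (F →* F) := fun k => Nat.rec (MonoidHom.id F) (fun _ acc => ψ.comp acc) k
  have hit_succ : ∀ k, it (k + 1) = ψ.comp (it k) := fun _ => rfl
  have hit_surj : ∀ k, Function.Surjective (it k) := by
    intro k
    induction k with
    | zero => exact fun x => ⟨x, rfl⟩
    | succ k ih => exact hsurj.comp ih
  have hit_add : ∀ a b, it (a + b) = (it a).comp (it b) := by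
    intro a b
    induction a with
    | zero =>
      rw [Nat.zero_add]
      exact (MonoidHom.id_comp (it b)).symm
    | succ a ih =>
      have h : a + 1 + b = (a + b) + 1 := by omega
      rw [h, hit_succ, ih, hit_succ, MonoidHom.comp_assoc]
  haveI : Finite (F →* Equiv.Perm (Fin (n + 1))) := by
    refine Finite.of_injective
      (fun p : F →* Equiv.Perm (Fin (n + 1)) => (fun i => p (FreeGroup.of i) : Fin 2 → _)) ?_
    intro p q h
    apply FreeGroup.ext_hom
    intro a
    exact congrFun h a
  obtain ⟨a, b, hne, heq⟩ :=
    Finite.exists_ne_map_eq_of_infinite (fun k => π.comp (it k))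
  obtain ⟨m, d, hd1, heqmd⟩ : ∃ m d, 1 ≤ d ∧ π.comp (it m) = π.comp (it (m + d)) := by
    rcases lt_or_gt_of_ne hne with h | h
    · exact ⟨a, b - a, by omega, by rw [show a + (b - a) = b from by omega]; exact heq⟩
    · exact ⟨b, a - b, by omega, by rw [show b + (a - b) = a from by omega]; exact heq.symm⟩
  have hcancel : ∀ x, π x = π (it d x) := by
    intro x
    obtain ⟨y, rfl⟩ := hit_surj m x
    have h2 : it (m + d) y = it d (it m y) := by
      rw [Nat.add_comm m d, hit_add d m]
      rfl
    calc π (it m y) = π (it (m + d) y) := DFunLike.congr_fun heqmd y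
      _ = π (it d (it m y)) := by rw [h2]
  have hfinal : π g = 1 := by
    have h3 := hcancel g
    have h4 : it d g = 1 := by
      obtain ⟨d', rfl⟩ : ∃ d', d = d' + 1 := ⟨d - 1, by omega⟩
      have h5 : it (d' + 1) g = it d' (ψ g) := by rw [hit_add d' 1]; rfl
      rw [h5, hgker, map_one]
    rw [h3, h4, map_one]
  exact hπ hfinal

lemma comm_of_subsingleton {β : Type} [Subsingleton β] (u v : FreeGroup β) :
    u * v = v * u := by
  have key : ∀ v u : FreeGroup β, Commute u v := by
    intro v
    refine FreeGroup.induction_on v ?_ ?_ ?_ ?_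
    · exact fun u => Commute.one_right u
    · intro x u
      refine FreeGroup.induction_on u ?_ ?_ ?_ ?_
      · exact Commute.one_left _
      · intro y
        rw [Subsingleton.elim y x]
      · intro y h
        exact h.inv_left
      · intro y z hy hz
        exact hy.mul_left hz
    · intro x h u
      exact (h u).inv_right
    · intro x y hx hy u
      exact (hx u).mul_right (hy u)
  exact (key v u).eq

lemma rank_two {β : Type} (q : FreeGroup (Fin 2) →* FreeGroup β)
    (hq : Function.Surjective q) (hna : ∃ u v : FreeGroup β, u * v ≠ v * u) :
    Nonempty (β ≃ Fin 2) := by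
  classical
  let τ : FreeGroup β →* Multiplicative (β →₀ ℤ) :=
    FreeGroup.lift (fun b => Multiplicative.ofAdd (Finsupp.single b 1))
  let ρ := τ.comp q
  let g0 : β →₀ ℤ := (ρ (FreeGroup.of 0)).toAdd
  let g1 : β →₀ ℤ := (ρ (FreeGroup.of 1)).toAdd
  have hmem : ∀ w : FreeGroup (Fin 2),
      (ρ w).toAdd ∈ Submodule.span ℤ ({g0, g1} : Set (β →₀ ℤ)) := by
    intro w
    refine FreeGroup.induction_on w ?_ ?_ ?_ ?_
    · rw [map_one]
      exact Submodule.zero_mem _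
    · intro x
      fin_cases x
      · exact Submodule.subset_span (Set.mem_insert _ _)
      · exact Submodule.subset_span (Set.mem_insert_of_mem _ rfl)
    · intro x h
      rw [map_inv, toAdd_inv]
      exact Submodule.neg_mem _ h
    · intro x y hx hy
      rw [map_mul, toAdd_mul]
      exact Submodule.add_mem _ hx hy
  have hspan : Submodule.span ℤ ({g0, g1} : Set (β →₀ ℤ)) = ⊤ := by
    rw [eq_top_iff, ← (Finsupp.basisSingleOne (R := ℤ) (ι := β)).span_eq]
    refine Submodule.span_le.mpr ?_
    rintro _ ⟨b, rfl⟩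
    obtain ⟨w, hw⟩ := hq (FreeGroup.of b)
    have hb : (Finsupp.basisSingleOne (R := ℤ) (ι := β)) b = (ρ w).toAdd := by
      show Finsupp.single b 1 = _
      simp only [ρ, MonoidHom.comp_apply, hw]
      simp [τ]
    rw [hb]
    exact hmem w
  have hrank : (#β : Cardinal) ≤ 2 := by
    have h1 : Module.rank ℤ (β →₀ ℤ) = #β := rank_finsupp_self' ℤ
    have h2 := rank_span_le (R := ℤ) ({g0, g1} : Set (β →₀ ℤ))
    rw [hspan, rank_top, h1] at h2
    refine h2.trans ?_
    refine Cardinal.mk_insert_le.trans ?_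
    rw [Cardinal.mk_singleton]
    norm_num
  haveI : Finite β := by
    rw [← Cardinal.lt_aleph0_iff_finite]
    exact hrank.trans_lt (Cardinal.nat_lt_aleph0 2)
  haveI : Fintype β := Fintype.ofFinite β
  have hcard : Fintype.card β = 2 := by
    have hle : Fintype.card β ≤ 2 := by
      have := hrank
      rw [Cardinal.mk_fintype] at this
      exact_mod_cast this
    by_contra h
    have h1 : Fintype.card β ≤ 1 := by omega
    haveI : Subsingleton β := Fintype.card_le_one_iff_subsingleton.mp h1
    obtain ⟨u, v, huv⟩ := hna
    exact huv (comm_of_subsingleton u v)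
  exact ⟨Fintype.equivFinOfCardEq hcard⟩

theorem free_case {ι : Type} (a b : FreeGroup ι) (hab : a * b ≠ b * a) :
    Function.Injective (FreeGroup.lift (fun i : Fin 2 => if i = 0 then a else b)) := by
  classical
  set f : Fin 2 → FreeGroup ι := fun i => if i = 0 then a else b with hf
  set φ := FreeGroup.lift f with hφ
  let H := φ.range
  let β := IsFreeGroup.Generators H
  let e : H ≃* FreeGroup β := IsFreeGroup.toFreeGroup H
  let q : FreeGroup (Fin 2) →* FreeGroup β := e.toMonoidHom.comp φ.rangeRestrict
  have hqsurj : Function.Surjective q :=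
    e.surjective.comp φ.rangeRestrict_surjective
  have hna : ∃ u v : FreeGroup β, u * v ≠ v * u := by
    refine ⟨q (FreeGroup.of 0), q (FreeGroup.of 1), fun hcomm => ?_⟩
    rw [← map_mul, ← map_mul] at hcomm
    have h3 : φ.rangeRestrict (FreeGroup.of 0 * FreeGroup.of 1)
        = φ.rangeRestrict (FreeGroup.of 1 * FreeGroup.of 0) := e.injective hcomm
    have h4 : φ (FreeGroup.of 0 * FreeGroup.of 1) = φ (FreeGroup.of 1 * FreeGroup.of 0) := by
      have := congrArg Subtype.val h3
      simpa [MonoidHom.coe_rangeRestrict] using this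
    rw [map_mul, map_mul] at h4
    have ha : φ (FreeGroup.of 0) = a := by simp [hφ, hf]
    have hb : φ (FreeGroup.of 1) = b := by simp [hφ, hf]
    rw [ha, hb] at h4
    exact hab h4
  obtain ⟨eqv⟩ := rank_two q hqsurj hna
  have hψi : Function.Injective
      ((FreeGroup.freeGroupCongr eqv).toMonoidHom.comp q) :=
    hopf _ ((FreeGroup.freeGroupCongr eqv).surjective.comp hqsurj)
  have hrr : Function.Injective φ.rangeRestrict := by
    have h5 : Function.Injective
        (⇑(FreeGroup.freeGroupCongr eqv).toMonoidHom ∘ ⇑e.toMonoidHom ∘ ⇑φ.rangeRestrict) := hψi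
    exact (h5.of_comp).of_comp
  exact MonoidHom.rangeRestrict_injective_iff.mp hrr

end NCF
/-- **Non-commuting elements of a fully residually free group generate a free group of
rank 2**: the homomorphism from the free group on two generators sending the generators
to `x` and `y` is injective. -/
theorem noncommuting_generate_free {G : Type*} [Group G]
    (hG : IsFullyResiduallyFree G) (x y : G) (hxy : x * y ≠ y * x) :
    Function.Injective
      (FreeGroup.lift (fun i : Fin 2 => if i = 0 then x else y) : FreeGroup (Fin 2) →* G) := by
  classical
  obtain ⟨ι, φ, hinj⟩ := hG {x * y, y * x}
  have hxysep : φ x * φ y ≠ φ y * φ x := by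
    intro h
    apply hxy
    apply hinj (by simp) (by simp)
    rw [map_mul, map_mul]
    exact h
  have hcomp : φ.comp (FreeGroup.lift (fun i : Fin 2 => if i = 0 then x else y))
      = FreeGroup.lift (fun i : Fin 2 => if i = 0 then φ x else φ y) := by
    ext i
    simp [apply_ite φ]
  have hfc := NCF.free_case (φ x) (φ y) hxysep
  rw [← hcomp] at hfc
  exact Function.Injective.of_comp hfc
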